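/- For integer n ≥ 2 and positive integer a, define f̃_n(a) = ∑_{k=0}^{a-1}(1-k²/a²)^n. Then f̃_n(a) = a·(2^n n!)²/(2n+1)! + 1/2 + O(a^{-2}) as a → ∞; in particular |f̃_n(a) - a(2^n n!)²/(2n+1)! - 1/2| ≤ C a^{-2} for some constant C depending only on n. -/
import Mathlib
open Finset

lemma keyA : ∀ (n : ℕ) (x : ℝ), (∀ i ∈ range (n+1), x + i ≠ 0) →
    ∑ p ∈ range (n+1), (-1)^p * (n.choose p) / (x + p) =
      n.factorial / ∏ i ∈ range (n+1), (x + i) := by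
  intro n
  induction n with
  | zero => intro x hx; simp
  | succ n ih =>
    intro x hx
    have hx0 : x ≠ 0 := by simpa using hx 0 (by simp)
    have hxn : x + (n:ℝ) + 1 ≠ 0 := by
      have := hx (n+1) (self_mem_range_succ _)
      push_cast at this; intro h; apply this; linarith
    have hx' : ∀ i ∈ range (n+1), (x+1) + i ≠ 0 := by
      intro i hi
      have := hx (i+1) (by simp at hi ⊢; omega)
      push_cast at this; intro h; apply this; linarith
    have hx'' : ∀ i ∈ range (n+1), x + i ≠ 0 := fun i hi =>
      hx i (by simp at hi ⊢; omega)
    -- F(n+1,x) = F(n,x) - F(n,x+1)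
    have step : ∑ p ∈ range (n+2), (-1:ℝ)^p * ((n+1).choose p) / (x + p) =
        (∑ p ∈ range (n+1), (-1:ℝ)^p * (n.choose p) / (x + p)) -
        ∑ p ∈ range (n+1), (-1:ℝ)^p * (n.choose p) / ((x+1) + p) := by
      have expand : ∀ p ∈ range (n+1), (-1:ℝ)^(p+1) * ((n+1).choose (p+1)) / (x + (p+1:ℕ)) =
          (-1:ℝ)^(p+1) * (n.choose (p+1)) / (x + (p+1:ℕ))
            - (-1:ℝ)^p * (n.choose p) / ((x+1) + p) := by
        intro p hp
        have e : (x+1) + (p:ℝ) = x + ((p+1:ℕ):ℝ) := by push_cast; ring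
        rw [e, div_sub_div_same]
        congr 1
        push_cast [Nat.choose_succ_succ]
        ring
      rw [Finset.sum_range_succ' _ (n+1), Finset.sum_congr rfl expand,
        Finset.sum_sub_distrib, sub_add_eq_add_sub]
      congr 1
      have : (∑ p ∈ range (n+1), (-1:ℝ)^(p+1) * (n.choose (p+1)) / (x + (p+1:ℕ)))
          + (-1:ℝ)^0 * ((n+1).choose 0) / (x + (0:ℕ)) =
          ∑ p ∈ range (n+2), (-1:ℝ)^p * (n.choose p) / (x + p) := by
        rw [Finset.sum_range_succ' _ (n+1)]
        simp
      rw [this, Finset.sum_range_succ]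
      simp
    rw [step, ih x hx'', ih (x+1) hx']
    -- product manipulations
    set Q : ℝ := ∏ i ∈ range n, (x + (i:ℝ) + 1) with hQdef
    have h1 : ∏ i ∈ range (n+1), (x + (i:ℝ)) = Q * x := by
      rw [Finset.prod_range_succ']
      simp only [Nat.cast_add, Nat.cast_one, Nat.cast_zero, add_zero]
      congr 1
      apply Finset.prod_congr rfl; intro i _; ring
    have h2 : ∏ i ∈ range (n+1), ((x+1) + (i:ℝ)) = Q * (x + n + 1) := by
      rw [Finset.prod_range_succ]
      congr 1
      · apply Finset.prod_congr rfl; intro i _; ring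
      · ring
    have h3 : ∏ i ∈ range (n+2), (x + (i:ℝ)) = Q * x * (x + n + 1) := by
      rw [Finset.prod_range_succ, h1]
      push_cast; ring
    have hQne : Q ≠ 0 := by
      rw [hQdef]
      apply Finset.prod_ne_zero_iff.2
      intro i hi
      have := hx (i+1) (by simp at hi ⊢; omega)
      push_cast at this; intro h; apply this; linarith
    rw [h1, h2, h3, Nat.factorial_succ]
    push_cast
    field_simp
    ring

lemma prodOdd (n : ℕ) : (∏ i ∈ range (n+1), (2*i+1)) * (2^n * n.factorial) = (2*n+1).factorial := by
  induction n with
  | zero => simp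
  | succ n ih =>
    have h2 : (2*(n+1)+1).factorial = (2*n+1+1+1) * ((2*n+1+1) * (2*n+1).factorial) := by
      have e : 2*(n+1)+1 = (2*n+1+1)+1 := by ring
      rw [e, Nat.factorial_succ, Nat.factorial_succ]
    rw [Finset.prod_range_succ, h2, ← ih, Nat.factorial_succ, pow_succ]
    ring

lemma keyB (n : ℕ) : ∑ p ∈ range (n+1), (-1:ℝ)^p * (n.choose p) / (2*p+1) =
    (2^n * n.factorial : ℝ)^2 / (2*n+1).factorial := by
  have h := keyA n (1/2) (by
    intro i _
    positivity)
  have hsum : ∑ p ∈ range (n+1), (-1:ℝ)^p * (n.choose p) / ((1:ℝ)/2 + p) =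
      2 * ∑ p ∈ range (n+1), (-1:ℝ)^p * (n.choose p) / (2*p+1) := by
    rw [Finset.mul_sum]
    apply Finset.sum_congr rfl
    intro p _
    have : (2*(p:ℝ)+1) ≠ 0 := by positivity
    have h2 : (1:ℝ)/2 + p ≠ 0 := by positivity
    field_simp
    ring
  have hprod : ∏ i ∈ range (n+1), ((1:ℝ)/2 + i) = ((2*n+1).factorial : ℝ) / (2^n * n.factorial * 2^(n+1)) := by
    have e1 : ∀ i ∈ range (n+1), ((1:ℝ)/2 + i) = (2*i+1 : ℕ) / 2 := by
      intro i _; push_cast; ring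
    rw [Finset.prod_congr rfl e1, Finset.prod_div_distrib, Finset.prod_const,
      ← Nat.cast_prod]
    have := prodOdd n
    have e2 : ((∏ i ∈ range (n+1), (2*i+1) : ℕ) : ℝ) = ((2*n+1).factorial : ℝ) / (2^n * n.factorial) := by
      rw [eq_div_iff (by positivity)]
      exact_mod_cast congrArg (Nat.cast (R := ℝ)) this
    rw [e2, Finset.card_range]
    ring
  rw [hsum, hprod] at h
  have hf : ((2*n+1).factorial : ℝ) ≠ 0 := by positivity
  have hf2 : ((n.factorial : ℝ)) ≠ 0 := by positivity
  have hr : (n.factorial:ℝ) * (2^n * n.factorial * 2^(n+1)) = 2 * ((2^n * n.factorial:ℝ))^2 := by ring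
  rw [eq_div_iff hf]
  field_simp at h
  nlinarith [h, hr]

lemma keyC (n : ℕ) (hn : 1 ≤ n) : ∑ p ∈ range (n+1), (-1:ℝ)^p * (n.choose p) = 0 := by
  have h := Int.alternating_sum_range_choose_of_ne (n := n) (by omega)
  have h2 : ((∑ i ∈ range (n+1), ((-1:ℤ))^i * (n.choose i) : ℤ) : ℝ) = 0 := by rw [h]; simp
  push_cast at h2
  exact h2

lemma keyD (n : ℕ) (hn : 2 ≤ n) : ∑ p ∈ range (n+1), (-1:ℝ)^p * (n.choose p) * p = 0 := by
  obtain ⟨m, rfl⟩ : ∃ m, n = m + 1 := ⟨n-1, by omega⟩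
  rw [Finset.sum_range_succ']
  simp only [Nat.cast_zero, mul_zero, add_zero]
  have e : ∀ q ∈ range (m+1), (-1:ℝ)^(q+1) * ((m+1).choose (q+1)) * ((q+1:ℕ):ℝ) =
      (-((m:ℝ)+1)) * ((-1)^q * (m.choose q)) := by
    intro q _
    have h := Nat.add_one_mul_choose_eq m q
    have h2 : (((m+1).choose (q+1) : ℝ)) * ((q+1:ℕ):ℝ) = ((m:ℝ)+1) * (m.choose q) := by
      push_cast
      have := congrArg (Nat.cast (R := ℝ)) h
      push_cast at this
      linarith
    rw [pow_succ, mul_comm ((-1:ℝ)^q) (-1), mul_assoc, mul_assoc, h2]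
    ring
  rw [Finset.sum_congr rfl e, ← Finset.mul_sum, keyC m (by omega), mul_zero]

lemma faulR (a m : ℕ) : (∑ k ∈ range a, (k:ℝ)^m) =
    ∑ i ∈ range (m+1), (bernoulli i : ℝ) * ((m+1).choose i) * (a:ℝ)^(m+1-i) / ((m:ℝ)+1) := by
  have h := sum_range_pow a m
  have h2 := congrArg (Rat.cast (K := ℝ)) h
  push_cast at h2
  exact h2

noncomputable def Dp (p : ℕ) : ℝ :=
  ∑ i ∈ Finset.Ico 3 (2*p+1), |(bernoulli i : ℝ)| * ((2*p+1).choose i) / (2*(p:ℝ)+1)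

lemma Dp_nonneg (p : ℕ) : 0 ≤ Dp p := by
  apply Finset.sum_nonneg
  intro i _
  positivity

lemma faulBound (p a : ℕ) (hp : 1 ≤ p) (ha : 1 ≤ a) :
    |(∑ k ∈ range a, (k:ℝ)^(2*p)) / (a:ℝ)^(2*p)
      - ((a:ℝ)/(2*(p:ℝ)+1) - 1/2 + (p:ℝ)/(6*(a:ℝ)))| ≤ Dp p / (a:ℝ)^2 := by
  have ha1 : (1:ℝ) ≤ (a:ℝ) := by exact_mod_cast ha
  have ha0 : (0:ℝ) < (a:ℝ) := by linarith
  have hane : (a:ℝ) ≠ 0 := ne_of_gt ha0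
  have hpne : (2*(p:ℝ)+1) ≠ 0 := by positivity
  rw [faulR]
  have h3 : 3 ≤ 2*p+1 := by omega
  rw [range_eq_Ico, ← Finset.sum_Ico_consecutive _ (Nat.zero_le 3) h3, ← range_eq_Ico]
  rw [Finset.sum_range_succ, Finset.sum_range_succ, Finset.sum_range_one]
  -- power identities
  have hpow1 : (a:ℝ)^(2*p+1-0) = (a:ℝ)^(2*p-1) * (a:ℝ) * (a:ℝ) := by
    rw [← pow_succ, ← pow_succ]; congr 1; omega
  have hpow2 : (a:ℝ)^(2*p+1-1) = (a:ℝ)^(2*p-1) * (a:ℝ) := by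
    rw [← pow_succ]; congr 1; omega
  have hpow3 : (a:ℝ)^(2*p+1-2) = (a:ℝ)^(2*p-1) := by
    have e : 2*p+1-2 = 2*p-1 := by omega
    rw [e]
  have hpow4 : (a:ℝ)^(2*p) = (a:ℝ)^(2*p-1) * (a:ℝ) := by
    rw [← pow_succ]; congr 1; omega
  have hpow5 : (a:ℝ)^(2*p) = (a:ℝ)^(2*p-2) * (a:ℝ)^2 := by
    rw [← pow_add]; congr 1; omega
  have hyne : (a:ℝ)^(2*p-1) ≠ 0 := by positivity
  -- bernoulli and choose values
  have hb0 : ((bernoulli 0 : ℚ) : ℝ) = 1 := by rw [bernoulli_zero]; norm_num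
  have hb1 : ((bernoulli 1 : ℚ) : ℝ) = -1/2 := by rw [bernoulli_one]; norm_num
  have hb2 : ((bernoulli 2 : ℚ) : ℝ) = 1/6 := by
    rw [bernoulli_eq_bernoulli'_of_ne_one (by norm_num), bernoulli'_two]; norm_num
  have hc2 : (2*p+1).choose 2 = (2*p+1)*p := by
    rw [Nat.choose_two_right]
    have e : (2*p+1) - 1 = 2*p := by omega
    rw [e]
    have e2 : (2*p+1)*(2*p) = ((2*p+1)*p)*2 := by ring
    rw [e2, Nat.mul_div_cancel _ (by norm_num)]
  have hmain : (((bernoulli 0 : ℚ):ℝ) * ((2*p+1).choose 0) * (a:ℝ)^(2*p+1-0) / (((2*p:ℕ):ℝ)+1)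
      + ((bernoulli 1 : ℚ):ℝ) * ((2*p+1).choose 1) * (a:ℝ)^(2*p+1-1) / (((2*p:ℕ):ℝ)+1)
      + ((bernoulli 2 : ℚ):ℝ) * ((2*p+1).choose 2) * (a:ℝ)^(2*p+1-2) / (((2*p:ℕ):ℝ)+1))
        / (a:ℝ)^(2*p)
      = (a:ℝ)/(2*(p:ℝ)+1) - 1/2 + (p:ℝ)/(6*(a:ℝ)) := by
    rw [hb0, hb1, hb2, hc2, Nat.choose_zero_right, Nat.choose_one_right,
      hpow1, hpow2, hpow3, hpow4]
    push_cast
    field_simp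
    ring
  rw [add_div, hmain, add_sub_cancel_left, abs_div, abs_of_pos (pow_pos ha0 _)]
  rw [div_le_div_iff₀ (pow_pos ha0 _) (pow_pos ha0 2)]
  have hterm : ∀ i ∈ Finset.Ico 3 (2*p+1),
      |(bernoulli i : ℝ) * ((2*p+1).choose i) * (a:ℝ)^(2*p+1-i) / (((2*p:ℕ):ℝ)+1)|
        ≤ (|(bernoulli i : ℝ)| * ((2*p+1).choose i) / (2*(p:ℝ)+1)) * (a:ℝ)^(2*p-2) := by
    intro i hi
    simp only [Finset.mem_Ico] at hi
    have e1 : |(bernoulli i : ℝ) * ((2*p+1).choose i) * (a:ℝ)^(2*p+1-i) / (((2*p:ℕ):ℝ)+1)|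
        = |(bernoulli i : ℝ)| * ((2*p+1).choose i) * (a:ℝ)^(2*p+1-i) / (2*(p:ℝ)+1) := by
      rw [abs_div, abs_mul, abs_mul, abs_of_nonneg (by positivity : (0:ℝ) ≤ ((2*p+1).choose i : ℝ)),
        abs_of_nonneg (by positivity : (0:ℝ) ≤ (a:ℝ)^(2*p+1-i)),
        abs_of_nonneg (by positivity : (0:ℝ) ≤ ((2*p:ℕ):ℝ)+1)]
      push_cast
      ring
    rw [e1, div_mul_eq_mul_div]
    apply div_le_div_of_nonneg_right ?_ (by positivity)
    · apply mul_le_mul_of_nonneg_left _ (by positivity)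
      exact pow_le_pow_right₀ ha1 (by omega)
  have hE : |∑ i ∈ Finset.Ico 3 (2*p+1),
      (bernoulli i : ℝ) * ((2*p+1).choose i) * (a:ℝ)^(2*p+1-i) / (((2*p:ℕ):ℝ)+1)|
      ≤ Dp p * (a:ℝ)^(2*p-2) := by
    refine (Finset.abs_sum_le_sum_abs _ _).trans ?_
    rw [Dp, Finset.sum_mul]
    exact Finset.sum_le_sum hterm
  calc |∑ i ∈ Finset.Ico 3 (2*p+1),
      (bernoulli i : ℝ) * ((2*p+1).choose i) * (a:ℝ)^(2*p+1-i) / (((2*p:ℕ):ℝ)+1)| * (a:ℝ)^2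
      ≤ (Dp p * (a:ℝ)^(2*p-2)) * (a:ℝ)^2 := mul_le_mul_of_nonneg_right hE (by positivity)
    _ = Dp p * (a:ℝ)^(2*p) := by rw [hpow5]; ring

theorem partition_asymptotic (n : ℕ) (hn : 2 ≤ n) :
    ∃ C : ℝ, ∀ a : ℕ, 0 < a →
      |(∑ k ∈ Finset.range a, (1 - (k : ℝ) ^ 2 / (a : ℝ) ^ 2) ^ n) -
          ((a : ℝ) * (2 ^ n * n.factorial : ℝ) ^ 2 / (2 * n + 1).factorial + 1 / 2)| ≤
        C / (a : ℝ) ^ 2 := by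
  classical
  set A : ℝ := (2 ^ n * n.factorial : ℝ) ^ 2 / (2 * n + 1).factorial with hAdef
  refine ⟨∑ p ∈ range n, ((n.choose (p+1) : ℝ)) * Dp (p+1), ?_⟩
  intro a ha
  have ha1 : (1:ℝ) ≤ (a:ℝ) := by exact_mod_cast ha
  have ha0 : (0:ℝ) < (a:ℝ) := by linarith
  have hane : (a:ℝ) ≠ 0 := ne_of_gt ha0
  set T : ℕ → ℝ := fun p => (∑ k ∈ range a, (k:ℝ)^(2*p)) / (a:ℝ)^(2*p) with hTdef
  set R : ℕ → ℝ := fun p =>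
    T p - ((a:ℝ)/(2*(p:ℝ)+1) - 1/2 + (p:ℝ)/(6*(a:ℝ))) with hRdef
  -- binomial expansion
  have hS : (∑ k ∈ Finset.range a, (1 - (k : ℝ) ^ 2 / (a : ℝ) ^ 2) ^ n)
      = ∑ p ∈ range (n+1), (-1:ℝ)^p * (n.choose p) * T p := by
    have hb : ∀ k ∈ range a, (1 - (k:ℝ)^2/(a:ℝ)^2)^n =
        ∑ p ∈ range (n+1), (-1:ℝ)^p * (n.choose p) * ((k:ℝ)^(2*p) / (a:ℝ)^(2*p)) := by
      intro k _
      have hcomm := add_pow (-((k:ℝ)^2/(a:ℝ)^2)) 1 n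
      rw [show (1 - (k:ℝ)^2/(a:ℝ)^2) = (-((k:ℝ)^2/(a:ℝ)^2)) + 1 by ring, hcomm]
      apply Finset.sum_congr rfl
      intro p _
      rw [one_pow, mul_one, neg_pow, div_pow, ← pow_mul, ← pow_mul]
      ring
    rw [Finset.sum_congr rfl hb, Finset.sum_comm]
    apply Finset.sum_congr rfl
    intro p _
    rw [hTdef]
    simp only []
    rw [← Finset.mul_sum, ← Finset.sum_div]
  have hT0 : T 0 = (a:ℝ) := by
    rw [hTdef]
    simp
  -- peel p = 0
  have hS' : (∑ k ∈ Finset.range a, (1 - (k : ℝ) ^ 2 / (a : ℝ) ^ 2) ^ n)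
      = (a:ℝ) + ∑ p ∈ range n, (-1:ℝ)^(p+1) * (n.choose (p+1)) * T (p+1) := by
    rw [hS, Finset.sum_range_succ']
    simp [hT0]
    ring
  have hA2 : ∑ p ∈ range n, (-1:ℝ)^(p+1) * (n.choose (p+1)) / (2*((p+1:ℕ):ℝ)+1) = A - 1 := by
    have h := keyB n
    rw [Finset.sum_range_succ'] at h
    simp only [pow_zero, Nat.choose_zero_right, Nat.cast_one, Nat.cast_zero, one_mul,
      mul_zero, zero_add] at h
    rw [← hAdef] at h
    norm_num at h
    push_cast at h ⊢
    linarith [h]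
  have hS1 : ∑ p ∈ range n, (-1:ℝ)^(p+1) * (n.choose (p+1)) = -1 := by
    have h := keyC n (by omega)
    rw [Finset.sum_range_succ'] at h
    simp at h
    linarith [h]
  have hS2 : ∑ p ∈ range n, (-1:ℝ)^(p+1) * (n.choose (p+1)) * ((p+1:ℕ):ℝ) = 0 := by
    have h := keyD n hn
    rw [Finset.sum_range_succ'] at h
    simp at h
    push_cast at h ⊢
    linarith [h]
  have hexp : ∀ p ∈ range n, (-1:ℝ)^(p+1) * (n.choose (p+1)) * T (p+1)
      = (a:ℝ) * ((-1:ℝ)^(p+1) * (n.choose (p+1)) / (2*((p+1:ℕ):ℝ)+1))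
        + ((-1:ℝ)^(p+1) * (n.choose (p+1))) * (-1/2)
        + ((-1:ℝ)^(p+1) * (n.choose (p+1)) * ((p+1:ℕ):ℝ)) * (1/(6*(a:ℝ)))
        + (-1:ℝ)^(p+1) * (n.choose (p+1)) * R (p+1) := by
    intro p _
    have hTeq : T (p+1) = ((a:ℝ)/(2*((p+1:ℕ):ℝ)+1) - 1/2 + ((p+1:ℕ):ℝ)/(6*(a:ℝ))) + R (p+1) := by
      rw [hRdef]
      push_cast
      ring
    rw [hTeq]
    have h6 : (6:ℝ)*(a:ℝ) ≠ 0 := by positivity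
    field_simp
    ring
  have hsum : ∑ p ∈ range n, (-1:ℝ)^(p+1) * (n.choose (p+1)) * T (p+1)
      = (a:ℝ) * (A - 1) + 1/2 + ∑ p ∈ range n, (-1:ℝ)^(p+1) * (n.choose (p+1)) * R (p+1) := by
    rw [Finset.sum_congr rfl hexp, Finset.sum_add_distrib, Finset.sum_add_distrib,
      Finset.sum_add_distrib, ← Finset.mul_sum, hA2, ← Finset.sum_mul, hS1,
      ← Finset.sum_mul, hS2]
    ring
  have hdiff : (∑ k ∈ Finset.range a, (1 - (k : ℝ) ^ 2 / (a : ℝ) ^ 2) ^ n) -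
      ((a : ℝ) * A + 1 / 2)
      = ∑ p ∈ range n, (-1:ℝ)^(p+1) * (n.choose (p+1)) * R (p+1) := by
    rw [hS', hsum]
    ring
  rw [show (a : ℝ) * (2 ^ n * n.factorial : ℝ) ^ 2 / (2 * n + 1).factorial
      = (a:ℝ) * A by rw [hAdef]; ring, hdiff]
  -- bound the remainder
  have hbound : ∀ p ∈ range n, |(-1:ℝ)^(p+1) * (n.choose (p+1)) * R (p+1)|
      ≤ ((n.choose (p+1) : ℝ)) * Dp (p+1) / (a:ℝ)^2 := by
    intro p _
    rw [abs_mul, abs_mul, abs_pow, abs_neg, abs_one, one_pow, one_mul,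
      abs_of_nonneg (by positivity : (0:ℝ) ≤ ((n.choose (p+1)):ℝ))]
    have hfb := faulBound (p+1) a (by omega) ha
    have hRabs : |R (p+1)| ≤ Dp (p+1) / (a:ℝ)^2 := by
      rw [hRdef]
      simp only []
      convert hfb using 3 <;> (push_cast; ring)
    calc ((n.choose (p+1)):ℝ) * |R (p+1)| ≤ ((n.choose (p+1)):ℝ) * (Dp (p+1) / (a:ℝ)^2) :=
          mul_le_mul_of_nonneg_left hRabs (by positivity)
      _ = ((n.choose (p+1)):ℝ) * Dp (p+1) / (a:ℝ)^2 := by ring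
  refine (Finset.abs_sum_le_sum_abs _ _).trans ?_
  rw [Finset.sum_div]
  exact Finset.sum_le_sum hbound
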